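/- Let N be a positive integer, V = {0,…,N−1}, U ∈ ℝ^{N×N} an orthogonal matrix, r ≤ N, F = {0,…,r−1}, and S ⊆ V with |S| ≥ r. Let g_0,…,g_{N−1} be positive real numbers such that g_i > g_j for every i ∈ F and every j ∉ F, and set T = U · diag(g_0,…,g_{N−1}) · Uᵀ. Assume the submatrix U_{S,F} has rank r. Then for every natural number k ≥ 1 the principal submatrix (T^k)_{S,S} is invertible, and for every vector f = U α with α_j = 0 for all j ∉ F, the reconstructions f̂_k := (T^k)_{V,S} · ((T^k)_{S,S})^{−1} · f_S converge to f as k → ∞. -/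

import Mathlib

open Matrix Finset Filter

/-- Submatrix of `M` with rows indexed by `A` and columns by `B`. -/
def subVV {N : ℕ} (M : Matrix (Fin N) (Fin N) ℝ) (A B : Finset (Fin N)) :
    Matrix {i // i ∈ A} {j // j ∈ B} ℝ := fun i j => M i.1 j.1

/-- Submatrix of `M` keeping all rows and columns indexed by `B`. -/
def subCols {N : ℕ} (M : Matrix (Fin N) (Fin N) ℝ) (B : Finset (Fin N)) :
    Matrix (Fin N) {j // j ∈ B} ℝ := fun i j => M i j.1

/-- Restriction of a vector to the indices in `A`. -/
def subVec {N : ℕ} (x : Fin N → ℝ) (A : Finset (Fin N)) : {i // i ∈ A} → ℝ := fun i => x i.1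

/-- A square real matrix whose rank equals the size of its index type is a unit. -/
lemma aux_isUnit_of_rank_eq_card {m : Type*} [Fintype m] [DecidableEq m]
    (A : Matrix m m ℝ) (h : A.rank = Fintype.card m) : IsUnit A := by
  rw [← Matrix.mulVec_injective_iff_isUnit, ← Matrix.coe_mulVecLin]
  have hsurj : Function.Surjective A.mulVecLin := by
    rw [← LinearMap.range_eq_top]
    apply Submodule.eq_top_of_finrank_eq
    rw [Module.finrank_fintype_fun_eq_card]
    exact h
  exact LinearMap.injective_iff_surjective.mpr hsurj

/-- Theorem 1 of the paper: for the localization operator `T = U diag(g) Uᵀ` with a kernel that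
is strictly larger on the passband `F = {0, …, r-1}` than outside it, the principal submatrices
`(T^k)_{S,S}` are invertible and the reconstructions
`f̂_k = (T^k)_{V,S} ((T^k)_{S,S})⁻¹ f_S` of an `F`-bandlimited signal `f = U α` converge to `f`. -/
theorem stmt0 (N r : ℕ) (hN : 0 < N) (hr : r ≤ N)
    (U : Matrix (Fin N) (Fin N) ℝ) (hU : U * Uᵀ = 1) (hU' : Uᵀ * U = 1)
    (F : Finset (Fin N)) (hF : ∀ i : Fin N, i ∈ F ↔ (i : ℕ) < r)
    (S : Finset (Fin N)) (hS : r ≤ S.card)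
    (g : Fin N → ℝ) (hgpos : ∀ i, 0 < g i)
    (hgF : ∀ i ∈ F, ∀ j ∉ F, g j < g i)
    (T : Matrix (Fin N) (Fin N) ℝ) (hT : T = U * Matrix.diagonal g * Uᵀ)
    (hrank : (subVV U S F).rank = r) :
    (∀ k : ℕ, 1 ≤ k → IsUnit (subVV (T ^ k) S S)) ∧
    ∀ α : Fin N → ℝ, (∀ j ∉ F, α j = 0) →
      Filter.Tendsto
        (fun k : ℕ =>
          (subCols (T ^ k) S).mulVec
            ((subVV (T ^ k) S S)⁻¹.mulVec (subVec (U.mulVec α) S)))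
        atTop (nhds (U.mulVec α)) := by
  classical
  set v : {i // i ∈ S} → Fin N := Subtype.val with hv
  have hvinj : Function.Injective v := Subtype.val_injective
  set Us : Matrix {i // i ∈ S} (Fin N) ℝ := U.submatrix v id with hUs
  -- powers of T
  have hTk : ∀ k : ℕ, T ^ k = U * Matrix.diagonal (fun i => g i ^ k) * Uᵀ := by
    intro k
    induction k with
    | zero =>
      have h1 : (fun i : Fin N => g i ^ 0) = fun _ => (1 : ℝ) := by funext i; simp
      rw [pow_zero, h1]
      rw [show (Matrix.diagonal fun _ : Fin N => (1 : ℝ)) = 1 from Matrix.diagonal_one]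
      rw [Matrix.mul_one, hU]
    | succ n ih =>
      rw [pow_succ, ih, hT]
      have h2 : ∀ A B : Matrix (Fin N) (Fin N) ℝ,
          (U * A * Uᵀ) * (U * B * Uᵀ) = U * (A * B) * Uᵀ := by
        intro A B
        simp only [Matrix.mul_assoc]
        rw [← Matrix.mul_assoc Uᵀ U (B * Uᵀ), hU', Matrix.one_mul]
      rw [h2, Matrix.diagonal_mul_diagonal]
      have h3 : (fun i => g i ^ n * g i) = fun i => g i ^ (n + 1) := by
        funext i; rw [pow_succ]
      rw [h3]
  -- submatrix identities
  have hsubVV : ∀ k : ℕ,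
      subVV (T ^ k) S S = Us * Matrix.diagonal (fun i => g i ^ k) * Usᵀ := by
    intro k
    have h1 : subVV (T ^ k) S S = (T ^ k).submatrix v v := rfl
    rw [h1, hTk k,
      Matrix.submatrix_mul (U * Matrix.diagonal (fun i => g i ^ k)) Uᵀ v id v
        Function.bijective_id,
      Matrix.submatrix_mul U (Matrix.diagonal (fun i => g i ^ k)) v id id
        Function.bijective_id,
      Matrix.submatrix_id_id]
    congr 1
  have hsubCols : ∀ k : ℕ,
      subCols (T ^ k) S = U * Matrix.diagonal (fun i => g i ^ k) * Usᵀ := by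
    intro k
    have h1 : subCols (T ^ k) S = (T ^ k).submatrix id v := rfl
    rw [h1, hTk k,
      Matrix.submatrix_mul (U * Matrix.diagonal (fun i => g i ^ k)) Uᵀ id id v
        Function.bijective_id,
      Matrix.submatrix_id_id]
    congr 1
  have hUsUsT : Us * Usᵀ = 1 := by
    have h1 : Us * Usᵀ = (U * Uᵀ).submatrix v v :=
      (Matrix.submatrix_mul U Uᵀ v id v Function.bijective_id).symm
    rw [h1, hU, Matrix.submatrix_one v hvinj]
  -- the quadratic form
  have hquad : ∀ (k : ℕ) (x : {i // i ∈ S} → ℝ),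
      x ⬝ᵥ ((Us * Matrix.diagonal (fun i => g i ^ k) * Usᵀ) *ᵥ x)
        = ∑ i : Fin N, g i ^ k * ((Usᵀ *ᵥ x) i) ^ 2 := by
    intro k x
    rw [← Matrix.mulVec_mulVec, ← Matrix.mulVec_mulVec, Matrix.dotProduct_mulVec x Us,
      show x ᵥ* Us = Usᵀ *ᵥ x from by rw [← Matrix.vecMul_transpose, Matrix.transpose_transpose]]
    unfold dotProduct
    apply Finset.sum_congr rfl
    intro i _
    rw [Matrix.mulVec_diagonal]
    ring
  -- invertibility of the principal submatrices
  have hBkunit : ∀ k : ℕ, IsUnit (Us * Matrix.diagonal (fun i => g i ^ k) * Usᵀ) := by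
    intro k
    rw [← Matrix.mulVec_injective_iff_isUnit, ← Matrix.coe_mulVecLin, ← LinearMap.ker_eq_bot,
      Matrix.ker_mulVecLin_eq_bot_iff]
    intro x hx
    have h0 : x ⬝ᵥ ((Us * Matrix.diagonal (fun i => g i ^ k) * Usᵀ) *ᵥ x) = 0 := by
      rw [hx, dotProduct_zero]
    rw [hquad k x] at h0
    have hterm : ∀ i ∈ Finset.univ, (0:ℝ) ≤ g i ^ k * ((Usᵀ *ᵥ x) i) ^ 2 := fun i _ =>
      mul_nonneg (pow_nonneg (hgpos i).le k) (sq_nonneg _)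
    have hw : Usᵀ *ᵥ x = 0 := by
      funext i
      have hi := (Finset.sum_eq_zero_iff_of_nonneg hterm).mp h0 i (Finset.mem_univ i)
      have hg : g i ^ k ≠ 0 := pow_ne_zero k (hgpos i).ne'
      have h2 : ((Usᵀ *ᵥ x) i) ^ 2 = 0 := (mul_eq_zero.mp hi).resolve_left hg
      exact (pow_eq_zero_iff (by norm_num : (2:ℕ) ≠ 0)).mp h2
    have hx0 : x = (Us * Usᵀ) *ᵥ x := by rw [hUsUsT, Matrix.one_mulVec]
    rw [hx0, ← Matrix.mulVec_mulVec, hw, Matrix.mulVec_zero]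
  refine ⟨fun k _ => by rw [hsubVV k]; exact hBkunit k, ?_⟩
  -- convergence
  intro α hα
  rcases Nat.eq_zero_or_pos r with hr0 | hrpos
  · -- r = 0 : α = 0 and everything is zero
    have hα0 : α = 0 := by
      funext j
      exact hα j (fun hj => by rw [hF j, hr0] at hj; omega)
    have hz0 : subVec (0 : Fin N → ℝ) S = 0 := rfl
    simp only [hα0, Matrix.mulVec_zero, hz0]
    exact tendsto_const_nhds
  -- main case : r ≥ 1
  have hFne : F.Nonempty := ⟨⟨0, hN⟩, (hF ⟨0, hN⟩).mpr (by simpa using hrpos)⟩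
  obtain ⟨i₀, hi₀F, hγeq⟩ := Finset.exists_mem_eq_inf' hFne g
  set γ : ℝ := F.inf' hFne g with hγdef
  have hγpos : 0 < γ := by rw [hγeq]; exact hgpos i₀
  have hγle : ∀ i ∈ F, γ ≤ g i := fun i hi => Finset.inf'_le g hi
  have hγgt : ∀ j ∉ F, g j < γ := fun j hj => by rw [hγeq]; exact hgF i₀ hi₀F j hj
  -- definitions of the k-dependent quantities
  set y : ℕ → {i // i ∈ S} → ℝ :=
    fun k => (Us * Matrix.diagonal (fun i => g i ^ k) * Usᵀ)⁻¹ *ᵥ (Us *ᵥ α) with hy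
  set w : ℕ → Fin N → ℝ := fun k => Usᵀ *ᵥ y k with hwdef
  set β : ℕ → Fin N → ℝ := fun k i => g i ^ k * w k i with hβdef
  have hfS : subVec (U.mulVec α) S = Us *ᵥ α := rfl
  have hβvec : ∀ k, β k = Matrix.diagonal (fun i => g i ^ k) *ᵥ w k := by
    intro k; funext i; rw [Matrix.mulVec_diagonal]
  -- the constraint
  have hconstraint : ∀ k, Us *ᵥ β k = Us *ᵥ α := by
    intro k
    have hdet : IsUnit (Us * Matrix.diagonal (fun i => g i ^ k) * Usᵀ).det :=
      (Matrix.isUnit_iff_isUnit_det _).mp (hBkunit k)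
    rw [hβvec k, hwdef, hy]
    rw [Matrix.mulVec_mulVec, Matrix.mulVec_mulVec, Matrix.mulVec_mulVec,
      Matrix.mul_nonsing_inv _ hdet, Matrix.one_mulVec]
  -- the expression equals U *ᵥ β k
  have hexpr : ∀ k : ℕ,
      (subCols (T ^ k) S).mulVec
        ((subVV (T ^ k) S S)⁻¹.mulVec (subVec (U.mulVec α) S)) = U *ᵥ β k := by
    intro k
    rw [hsubCols k, hsubVV k, hfS]
    rw [hβvec k, hwdef, hy]
    simp only [Matrix.mulVec_mulVec, Matrix.mul_assoc]
  -- energy bound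
  have henergy : ∀ k : ℕ,
      ∑ i : Fin N, g i ^ k * (w k i) ^ 2 ≤ ∑ i ∈ F, α i ^ 2 / g i ^ k := by
    intro k
    have hQ : ∑ i : Fin N, g i ^ k * (w k i) ^ 2 = ∑ i : Fin N, α i * w k i := by
      have h1 : ∑ i : Fin N, g i ^ k * (w k i) ^ 2 = β k ⬝ᵥ w k := by
        unfold dotProduct
        apply Finset.sum_congr rfl
        intro i _
        rw [hβdef]
        ring
      have h2 : β k ⬝ᵥ w k = (Us *ᵥ β k) ⬝ᵥ y k := by
        rw [hwdef, Matrix.dotProduct_mulVec, Matrix.vecMul_transpose]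
      have h3 : α ⬝ᵥ w k = (Us *ᵥ α) ⬝ᵥ y k := by
        simp only [hwdef]
        conv_lhs => rw [Matrix.dotProduct_mulVec, Matrix.vecMul_transpose]
      rw [h1, h2, hconstraint k, ← h3]
      rfl
    have hP : ∑ i : Fin N, α i ^ 2 / g i ^ k = ∑ i ∈ F, α i ^ 2 / g i ^ k := by
      rw [eq_comm]
      apply Finset.sum_subset (Finset.subset_univ F)
      intro j _ hj
      rw [hα j hj]
      simp
    have hterm : ∀ i ∈ Finset.univ, α i * w k i
        ≤ (g i ^ k * (w k i) ^ 2 + α i ^ 2 / g i ^ k) / 2 := by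
      intro i _
      have ht : (0:ℝ) < g i ^ k := pow_pos (hgpos i) k
      have hkey : g i ^ k * (w k i) ^ 2 - 2 * (α i * w k i) + α i ^ 2 / g i ^ k
          = (g i ^ k * w k i - α i) ^ 2 / g i ^ k := by
        field_simp
        ring
      have hnn : (0:ℝ) ≤ (g i ^ k * w k i - α i) ^ 2 / g i ^ k :=
        div_nonneg (sq_nonneg _) ht.le
      linarith [hkey ▸ hnn]
    have hsum := Finset.sum_le_sum hterm
    rw [← hQ] at hsum
    have hsplit : ∑ i : Fin N, (g i ^ k * (w k i) ^ 2 + α i ^ 2 / g i ^ k) / 2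
        = (∑ i : Fin N, g i ^ k * (w k i) ^ 2) / 2 + (∑ i : Fin N, α i ^ 2 / g i ^ k) / 2 := by
      rw [← Finset.sum_div, Finset.sum_add_distrib, add_div]
    rw [hsplit] at hsum
    rw [← hP]
    linarith
  -- componentwise bound off F
  set C : ℝ := ∑ i ∈ F, α i ^ 2 with hC
  have hC0 : 0 ≤ C := Finset.sum_nonneg fun i _ => sq_nonneg _
  have hbound : ∀ j ∉ F, ∀ k : ℕ, (β k j) ^ 2 ≤ C * (g j / γ) ^ k := by
    intro j hj k
    have h1 : g j ^ k * (w k j) ^ 2 ≤ ∑ i : Fin N, g i ^ k * (w k i) ^ 2 :=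
      Finset.single_le_sum
        (fun i _ => mul_nonneg (pow_nonneg (hgpos i).le k) (sq_nonneg _))
        (Finset.mem_univ j)
    have h2 : ∑ i ∈ F, α i ^ 2 / g i ^ k ≤ C / γ ^ k := by
      rw [hC, Finset.sum_div]
      apply Finset.sum_le_sum
      intro i hi
      apply div_le_div_of_nonneg_left (sq_nonneg _) (pow_pos hγpos k)
      exact pow_le_pow_left₀ hγpos.le (hγle i hi) k
    have h3 : g j ^ k * (w k j) ^ 2 ≤ C / γ ^ k := le_trans h1 (le_trans (henergy k) h2)
    have hgj : (0:ℝ) < g j ^ k := pow_pos (hgpos j) k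
    have h4 : (β k j) ^ 2 = g j ^ k * (g j ^ k * (w k j) ^ 2) := by
      rw [hβdef]; ring
    calc (β k j) ^ 2 = g j ^ k * (g j ^ k * (w k j) ^ 2) := h4
      _ ≤ g j ^ k * (C / γ ^ k) := by
          exact mul_le_mul_of_nonneg_left h3 hgj.le
      _ = C * (g j / γ) ^ k := by
          rw [div_pow]
          field_simp
  -- convergence off F
  have hβj : ∀ j ∉ F, Tendsto (fun k => β k j) atTop (nhds 0) := by
    intro j hj
    have hρ0 : (0:ℝ) ≤ g j / γ := div_nonneg (hgpos j).le hγpos.le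
    have hρ1 : g j / γ < 1 := (div_lt_one hγpos).mpr (hγgt j hj)
    have hgeo : Tendsto (fun k : ℕ => C * (g j / γ) ^ k) atTop (nhds 0) := by
      have := (tendsto_pow_atTop_nhds_zero_of_lt_one hρ0 hρ1).const_mul C
      simpa using this
    have hsq : Tendsto (fun k => (β k j) ^ 2) atTop (nhds 0) :=
      squeeze_zero (fun k => sq_nonneg _) (fun k => hbound j hj k) hgeo
    have habs : Tendsto (fun k => |β k j|) atTop (nhds 0) := by
      have := (Real.continuous_sqrt.tendsto 0).comp hsq
      simpa [Function.comp_def, Real.sqrt_sq_eq_abs, Real.sqrt_zero] using this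
    refine tendsto_of_tendsto_of_tendsto_of_le_of_le (by simpa using habs.neg) habs
      (fun k => neg_abs_le _) (fun k => le_abs_self _)
  -- the F part via the rank hypothesis
  have hFcard : F.card = r := by
    apply Finset.card_eq_of_bijective (fun i hi => (⟨i, lt_of_lt_of_le hi hr⟩ : Fin N))
    · intro a ha
      refine ⟨a.1, (hF a).mp ha, ?_⟩
      exact Fin.ext rfl
    · intro i hi
      exact (hF _).mpr hi
    · intro i j hi hj hij
      exact congrArg Fin.val hij
  set A : Matrix {i // i ∈ S} {j // j ∈ F} ℝ := subVV U S F with hA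
  set G : Matrix {j // j ∈ F} {j // j ∈ F} ℝ := Aᵀ * A with hG
  have hGunit : IsUnit G := by
    apply aux_isUnit_of_rank_eq_card
    rw [hG, Matrix.rank_transpose_mul_self, hA, hrank, Fintype.card_coe, hFcard]
  have hGdet : IsUnit G.det := (Matrix.isUnit_iff_isUnit_det _).mp hGunit
  set Ucm : Matrix {i // i ∈ S} {j // j ∈ Fᶜ} ℝ := fun s j => U s.1 j.1 with hUcm
  set dF : ℕ → {j // j ∈ F} → ℝ := fun k j => β k j.1 - α j.1 with hdF
  set dC : ℕ → {j // j ∈ Fᶜ} → ℝ := fun k j => β k j.1 with hdC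
  have hsplit : ∀ k, A *ᵥ dF k = -(Ucm *ᵥ dC k) := by
    intro k
    funext s
    have h0 : ∀ j : Fin N, j ∈ Fᶜ → U s.1 j * (β k j - α j) = U s.1 j * β k j := by
      intro j hj
      rw [hα j (Finset.mem_compl.mp hj)]
      ring
    have huniv : ∑ j : Fin N, U s.1 j * (β k j - α j) = 0 := by
      have h1 : ∑ j : Fin N, U s.1 j * (β k j - α j)
          = (Us *ᵥ β k) s - (Us *ᵥ α) s := by
        simp only [Matrix.mulVec, dotProduct, ← Finset.sum_sub_distrib]
        apply Finset.sum_congr rfl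
        intro j _
        simp only [hUs, Matrix.submatrix_apply, id_eq]
        ring
      rw [h1, hconstraint k, sub_self]
    have hFsum : (A *ᵥ dF k) s = ∑ j ∈ F, U s.1 j * (β k j - α j) := by
      rw [← Finset.sum_coe_sort F (fun j => U s.1 j * (β k j - α j))]
      simp only [Matrix.mulVec, dotProduct]
      rfl
    have hCsum : (Ucm *ᵥ dC k) s = ∑ j ∈ Fᶜ, U s.1 j * (β k j - α j) := by
      rw [Finset.sum_congr rfl h0,
        ← Finset.sum_coe_sort Fᶜ (fun j => U s.1 j * β k j)]
      simp only [Matrix.mulVec, dotProduct]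
      rfl
    have hsum2 := Finset.sum_add_sum_compl F (fun j => U s.1 j * (β k j - α j))
    rw [huniv] at hsum2
    have : (A *ᵥ dF k) s + (Ucm *ᵥ dC k) s = 0 := by rw [hFsum, hCsum]; exact hsum2
    simp only [Pi.neg_apply]
    linarith
  set M : Matrix {j // j ∈ F} {j // j ∈ Fᶜ} ℝ := -(G⁻¹ * (Aᵀ * Ucm)) with hM
  have hdFeq : ∀ k, dF k = M *ᵥ dC k := by
    intro k
    have h1 : G *ᵥ dF k = -((Aᵀ * Ucm) *ᵥ dC k) := by
      rw [hG, ← Matrix.mulVec_mulVec, hsplit k, Matrix.mulVec_neg, Matrix.mulVec_mulVec]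
    calc dF k = (G⁻¹ * G) *ᵥ dF k := by
            rw [Matrix.nonsing_inv_mul _ hGdet, Matrix.one_mulVec]
      _ = G⁻¹ *ᵥ (G *ᵥ dF k) := by rw [Matrix.mulVec_mulVec]
      _ = G⁻¹ *ᵥ (-((Aᵀ * Ucm) *ᵥ dC k)) := by rw [h1]
      _ = M *ᵥ dC k := by
            rw [hM, Matrix.neg_mulVec, Matrix.mulVec_neg, Matrix.mulVec_mulVec]
  -- componentwise convergence of β to α
  have hβall : ∀ j : Fin N, Tendsto (fun k => β k j) atTop (nhds (α j)) := by
    intro j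
    by_cases hj : j ∈ F
    · have h0 : Tendsto (fun k => dF k ⟨j, hj⟩) atTop (nhds 0) := by
        have heq : (fun k => dF k ⟨j, hj⟩)
            = fun k => ∑ m : {j // j ∈ Fᶜ}, M ⟨j, hj⟩ m * dC k m := by
          funext k
          rw [hdFeq k]
          rfl
        rw [heq]
        have hZ : Tendsto (fun k => ∑ m : {j // j ∈ Fᶜ}, M ⟨j, hj⟩ m * dC k m) atTop
            (nhds (∑ m : {j // j ∈ Fᶜ}, M ⟨j, hj⟩ m * 0)) := by
          apply tendsto_finset_sum
          intro m _
          exact (hβj m.1 (Finset.mem_compl.mp m.2)).const_mul (M ⟨j, hj⟩ m)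
        simpa using hZ
      have := h0.add_const (α j)
      simp only [hdF, sub_add_cancel, zero_add] at this
      exact this
    · rw [hα j hj]
      exact hβj j hj
  -- conclude
  have htend : Tendsto (fun k => U *ᵥ β k) atTop (nhds (U *ᵥ α)) := by
    rw [tendsto_pi_nhds]
    intro i
    have hZ : Tendsto (fun k => ∑ j : Fin N, U i j * β k j) atTop
        (nhds (∑ j : Fin N, U i j * α j)) := by
      apply tendsto_finset_sum
      intro j _
      exact (hβall j).const_mul (U i j)
    simpa [Matrix.mulVec, dotProduct] using hZ
  exact htend.congr fun k => (hexpr k).symm
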